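/- Let N, d be positive integers and let U be a unitary matrix indexed by Fin N × Fin d. For every Y : Matrix (Fin d) (Fin d) ℂ, the following are equivalent: (i) (1 ⊗ Y) * U = U * (1 ⊗ Y) and (1 ⊗ Y) * Uᴴ = Uᴴ * (1 ⊗ Y) (equivalently, Y belongs to the commutant of A(U)); (ii) L(Y) = Y and L*(Y) = Y, where L(X) k l = (1/N) ∑_{i} (U * (1 ⊗ X) * Uᴴ) (i,k) (i,l) and L*(X) k l = (1/N) ∑_{i} (Uᴴ * (1 ⊗ X) * U) (i,k) (i,l). That is, the commutant of the Environment Algebra A(U) is exactly the common eigenspace of L and L* for the eigenvalue 1. -/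

import Mathlib

open scoped Kronecker
open Matrix

/-- The slice `M(f,g)` of an operator on `ℂ^N ⊗ ℂ^d`: the partial trace `Tr_{|g⟩⟨f|}[M]`,
given by `M(f,g) k l = ∑ i j, conj (f i) * g j * M (i,k) (j,l)`. -/
noncomputable def envSlice {N d : ℕ} (M : Matrix (Fin N × Fin d) (Fin N × Fin d) ℂ)
    (f g : Fin N → ℂ) : Matrix (Fin d) (Fin d) ℂ :=
  Matrix.of fun k l => ∑ i, ∑ j, (starRingEnd ℂ) (f i) * g j * M (i, k) (j, l)

/-- The Environment Algebra `A(U)`: the unital star-subalgebra generated by all slices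
`U(f,g)` and `Uᴴ(f,g)`. -/
noncomputable def envAlg {N d : ℕ} (U : Matrix (Fin N × Fin d) (Fin N × Fin d) ℂ) :
    StarSubalgebra ℂ (Matrix (Fin d) (Fin d) ℂ) :=
  StarAlgebra.adjoin ℂ
    ({A | ∃ f g, A = envSlice U f g} ∪ {A | ∃ f g, A = envSlice Uᴴ f g})

/-- The Environment Right-Action Algebra `A_r(U)`: the unital star-subalgebra generated by all
products `Uᴴ(f₁,g₁) * U(f₂,g₂)`. -/
noncomputable def envActAlg {N d : ℕ} (U : Matrix (Fin N × Fin d) (Fin N × Fin d) ℂ) :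
    StarSubalgebra ℂ (Matrix (Fin d) (Fin d) ℂ) :=
  StarAlgebra.adjoin ℂ
    {A | ∃ f₁ g₁ f₂ g₂, A = envSlice Uᴴ f₁ g₁ * envSlice U f₂ g₂}

/-- The CP map `L : X ↦ Tr_H[U ((1/N)·1 ⊗ X) Uᴴ]` on environment operators. -/
noncomputable def Lmap {N d : ℕ} (U : Matrix (Fin N × Fin d) (Fin N × Fin d) ℂ)
    (X : Matrix (Fin d) (Fin d) ℂ) : Matrix (Fin d) (Fin d) ℂ :=
  Matrix.of fun k l => (N : ℂ)⁻¹ *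
    ∑ i, (U * ((1 : Matrix (Fin N) (Fin N) ℂ) ⊗ₖ X) * Uᴴ) (i, k) (i, l)

/-- The adjoint CP map `L* : X ↦ Tr_H[Uᴴ ((1/N)·1 ⊗ X) U]`. -/
noncomputable def LstarMap {N d : ℕ} (U : Matrix (Fin N × Fin d) (Fin N × Fin d) ℂ)
    (X : Matrix (Fin d) (Fin d) ℂ) : Matrix (Fin d) (Fin d) ℂ :=
  Matrix.of fun k l => (N : ℂ)⁻¹ *
    ∑ i, (Uᴴ * ((1 : Matrix (Fin N) (Fin N) ℂ) ⊗ₖ X) * U) (i, k) (i, l)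

lemma sum_rot {α β γ M : Type*} [Fintype α] [Fintype β] [Fintype γ] [AddCommMonoid M]
    (f : α → β → γ → M) :
    ∑ i, ∑ a, ∑ b, f i a b = ∑ b, ∑ a, ∑ i, f i a b := by
  rw [Finset.sum_comm]
  trans ∑ a, ∑ b, ∑ i, f i a b
  · exact Finset.sum_congr rfl fun a _ => Finset.sum_comm
  · exact Finset.sum_comm

lemma kron_one_conjT {N d : ℕ} (Y : Matrix (Fin d) (Fin d) ℂ) :
    ((1 : Matrix (Fin N) (Fin N) ℂ) ⊗ₖ Y)ᴴ = (1 : Matrix (Fin N) (Fin N) ℂ) ⊗ₖ Yᴴ := by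
  ext ⟨i, k⟩ ⟨j, l⟩
  simp only [conjTranspose_apply, kroneckerMap_apply, one_apply, star_mul', apply_ite,
    star_one, star_zero, ite_mul, one_mul, zero_mul]
  by_cases h : i = j <;> simp [h, eq_comm]

lemma trace_kron_helper {N d : ℕ} (Y : Matrix (Fin d) (Fin d) ℂ)
    (M : Matrix (Fin N × Fin d) (Fin N × Fin d) ℂ) :
    Matrix.trace (((1 : Matrix (Fin N) (Fin N) ℂ) ⊗ₖ Y)ᴴ * M)
      = ∑ k, ∑ l, star (Y k l) * ∑ i, M (i, k) (i, l) := by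
  rw [kron_one_conjT]
  simp only [Matrix.trace, Matrix.diag, Matrix.mul_apply, Fintype.sum_prod_type,
    kroneckerMap_apply, conjTranspose_apply, one_apply, ite_mul, one_mul, zero_mul,
    Finset.mul_sum]
  trans ∑ i : Fin N, ∑ k : Fin d, ∑ l : Fin d, star (Y l k) * M (i, l) (i, k)
  · refine Finset.sum_congr rfl fun i _ => Finset.sum_congr rfl fun k _ => ?_
    rw [Finset.sum_comm]
    simp [Finset.sum_ite_eq, Finset.mem_univ]
  · rw [sum_rot fun i k l => star (Y l k) * M (i, l) (i, k)]

lemma eq_zero_of_trace_zero {n : Type*} [Fintype n] [DecidableEq n] {D : Matrix n n ℂ}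
    (h : Matrix.trace (Dᴴ * D) = 0) : D = 0 := by
  have h2 : (((∑ j, ∑ i, Complex.normSq (D i j) : ℝ)) : ℂ) = 0 := by
    rw [← h]
    simp only [Matrix.trace, Matrix.diag, Matrix.mul_apply, conjTranspose_apply]
    push_cast
    congr 1; ext j; congr 1; ext i
    rw [Complex.star_def, mul_comm, Complex.mul_conj]
  have h3 : ∑ j, ∑ i, Complex.normSq (D i j) = 0 := by exact_mod_cast h2
  ext i j
  have := (Finset.sum_eq_zero_iff_of_nonneg (fun j _ => Finset.sum_nonneg
    (fun i _ => Complex.normSq_nonneg _))).1 h3 j (Finset.mem_univ j)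
  have := (Finset.sum_eq_zero_iff_of_nonneg
    (fun i _ => Complex.normSq_nonneg (D i j))).1 this i (Finset.mem_univ i)
  simpa [Complex.normSq_eq_zero] using this


/-- the commutant of the Environment Algebra `A(U)` is exactly the common
eigenspace of `L` and `L*` for the eigenvalue `1`. -/
theorem commutant_envAlg_eq_fixed_points (N d : ℕ) (hN : 0 < N) (hd : 0 < d)
    (U : Matrix (Fin N × Fin d) (Fin N × Fin d) ℂ)
    (hU : Uᴴ * U = 1) (hU' : U * Uᴴ = 1) :
    ∀ Y : Matrix (Fin d) (Fin d) ℂ,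
      (((1 : Matrix (Fin N) (Fin N) ℂ) ⊗ₖ Y) * U = U * ((1 : Matrix (Fin N) (Fin N) ℂ) ⊗ₖ Y) ∧
        ((1 : Matrix (Fin N) (Fin N) ℂ) ⊗ₖ Y) * Uᴴ = Uᴴ * ((1 : Matrix (Fin N) (Fin N) ℂ) ⊗ₖ Y))
      ↔ (Lmap U Y = Y ∧ LstarMap U Y = Y) := by
  intro Y
  have hNC : (N : ℂ) ≠ 0 := Nat.cast_ne_zero.2 hN.ne'
  set A : Matrix (Fin N × Fin d) (Fin N × Fin d) ℂ := (1 : Matrix (Fin N) (Fin N) ℂ) ⊗ₖ Y with hA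
  have hAdiag : ∀ (k l : Fin d) (i : Fin N), A (i, k) (i, l) = Y k l := by
    intro k l i; simp [hA, Matrix.one_apply, kroneckerMap_apply]
  constructor
  · rintro ⟨h1, h2⟩
    constructor
    · ext k l
      have : U * A * Uᴴ = A := by rw [← h1, mul_assoc, hU', mul_one]
      simp only [Lmap, Matrix.of_apply, ← hA, this, hAdiag]
      rw [Finset.sum_const, Finset.card_univ, Fintype.card_fin, nsmul_eq_mul]
      field_simp
    · ext k l
      have : Uᴴ * A * U = A := by rw [← h2, mul_assoc, hU, mul_one]
      simp only [LstarMap, Matrix.of_apply, ← hA, this, hAdiag]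
      rw [Finset.sum_const, Finset.card_univ, Fintype.card_fin, nsmul_eq_mul]
      field_simp
  · rintro ⟨hL, _⟩
    set B : Matrix (Fin N × Fin d) (Fin N × Fin d) ℂ := U * A * Uᴴ with hB
    have hBsum : ∀ k l : Fin d, ∑ i, B (i, k) (i, l) = (N : ℂ) * Y k l := by
      intro k l
      have h := congrArg (fun M : Matrix (Fin d) (Fin d) ℂ => M k l) hL
      simp only [Lmap, Matrix.of_apply] at h
      field_simp at h
      rw [h]
    have hAsum : ∀ k l : Fin d, ∑ i, A (i, k) (i, l) = (N : ℂ) * Y k l := by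
      intro k l
      simp only [hAdiag, Finset.sum_const, Finset.card_univ, Fintype.card_fin, nsmul_eq_mul]
    have tAB : Matrix.trace (Aᴴ * B) = Matrix.trace (Aᴴ * A) := by
      rw [hA, trace_kron_helper, trace_kron_helper]
      refine Finset.sum_congr rfl fun k _ => Finset.sum_congr rfl fun l _ => ?_
      rw [show ∑ i, B (i, k) (i, l) = (N : ℂ) * Y k l from hBsum k l,
        show ∑ i, ((1 : Matrix (Fin N) (Fin N) ℂ) ⊗ₖ Y) (i, k) (i, l) = (N : ℂ) * Y k l from
          hA ▸ hAsum k l]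
    have tBB : Matrix.trace (Bᴴ * B) = Matrix.trace (Aᴴ * A) := by
      rw [hB]
      have e1 : (U * A * Uᴴ)ᴴ * (U * A * Uᴴ) = U * (Aᴴ * (A * Uᴴ)) := by
        simp only [conjTranspose_mul, conjTranspose_conjTranspose, mul_assoc]
        rw [← mul_assoc Uᴴ U (A * Uᴴ), hU, one_mul]
      rw [e1, Matrix.trace_mul_comm]
      simp only [mul_assoc]
      rw [hU, mul_one]
    have hstar : star (Matrix.trace (Aᴴ * A)) = Matrix.trace (Aᴴ * A) := by
      conv_rhs => rw [show Aᴴ * A = (Aᴴ * A)ᴴ by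
        rw [conjTranspose_mul, conjTranspose_conjTranspose]]
      rw [Matrix.trace_conjTranspose]
    have tBA : Matrix.trace (Bᴴ * A) = Matrix.trace (Aᴴ * A) := by
      have e : Bᴴ * A = (Aᴴ * B)ᴴ := by
        conv_rhs => rw [conjTranspose_mul, conjTranspose_conjTranspose]
      rw [e, Matrix.trace_conjTranspose, tAB, hstar]
    have tDD : Matrix.trace ((B - A)ᴴ * (B - A)) = 0 := by
      rw [conjTranspose_sub, sub_mul, mul_sub, mul_sub, Matrix.trace_sub, Matrix.trace_sub,
        Matrix.trace_sub, tBB, tBA, tAB]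
      ring
    have hBA : B = A := sub_eq_zero.mp (eq_zero_of_trace_zero tDD)
    have h1 : U * A = A * U := by
      have h := congrArg (fun M => M * U) hBA
      rwa [mul_assoc (U * A) Uᴴ U, hU, mul_one] at h
    have h2 : A * Uᴴ = Uᴴ * A := by
      calc A * Uᴴ = Uᴴ * U * A * Uᴴ := by rw [hU, one_mul]
        _ = Uᴴ * (U * A) * Uᴴ := by rw [mul_assoc Uᴴ U A]
        _ = Uᴴ * (A * U) * Uᴴ := by rw [h1]
        _ = Uᴴ * A * (U * Uᴴ) := by rw [mul_assoc, mul_assoc, mul_assoc]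
        _ = Uᴴ * A := by rw [hU', mul_one]
    exact ⟨h1.symm, h2⟩
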